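/- arXiv:0903.5276 — 2 statements merged into one kernel-verified Lean document; each statement's English description precedes it below -/
import Mathlib

section
/- Let ρ be as above and for ε > 0 define f : ℝ³ → ℝ by f(x) = ρ(|x|)/(1 + ε ρ(|x|)). Then f is twice continuously differentiable on ℝ³ and satisfies ‖∇f‖_∞ < 1. -/
open Real Filter Asymptotics
set_option maxHeartbeats 2000000
set_option synthInstance.maxHeartbeats 1000000

lemma ev_neg {t : ℝ} (h : t < 0) : ∀ᶠ s in nhds t, s < 0 :=
  eventually_nhds_iff.mpr ⟨Set.Iio 0, fun _ hs => Set.mem_Iio.mp hs, isOpen_Iio, h⟩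

lemma ev_pos {t : ℝ} (h : 0 < t) : ∀ᶠ s in nhds t, 0 < s :=
  eventually_nhds_iff.mpr ⟨Set.Ioi 0, fun _ hs => Set.mem_Ioi.mp hs, isOpen_Ioi, h⟩

lemma hq3 (t : ℝ) : HasDerivAt (fun t : ℝ => max t 0 ^ 3) (3 * max t 0 ^ 2) t := by
  rcases lt_trichotomy t 0 with h | h | h
  · have heq : (fun t : ℝ => max t 0 ^ 3) =ᶠ[nhds t] fun _ => 0 := by
      filter_upwards [ev_neg h] with s hs
      simp [max_eq_right hs.le]
    rw [show (3 : ℝ) * max t 0 ^ 2 = 0 by rw [max_eq_right h.le]; ring]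
    exact (hasDerivAt_const t 0).congr_of_eventuallyEq heq
  · subst h
    rw [hasDerivAt_iff_isLittleO, Asymptotics.isLittleO_iff]
    intro c hc
    rw [Metric.eventually_nhds_iff]
    refine ⟨min 1 c, lt_min one_pos hc, fun {s} hs => ?_⟩
    simp only [Real.dist_eq, sub_zero] at hs
    have hs1 : |s| < 1 := lt_of_lt_of_le hs (min_le_left _ _)
    have hs2 : |s| < c := lt_of_lt_of_le hs (min_le_right _ _)
    rcases le_or_gt s 0 with h | h
    · have e : max s 0 ^ 3 - max (0:ℝ) 0 ^ 3 - (s - 0) • (3 * max (0:ℝ) 0 ^ 2) = 0 := by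
        rw [max_eq_right h]; simp
      rw [e]; simp; positivity
    · have e : max s 0 ^ 3 - max (0:ℝ) 0 ^ 3 - (s - 0) • (3 * max (0:ℝ) 0 ^ 2) = s ^ 3 := by
        rw [max_eq_left h.le]; simp
      rw [e, Real.norm_eq_abs, Real.norm_eq_abs, sub_zero, abs_of_pos (pow_pos h 3),
        abs_of_pos h]
      rw [abs_of_pos h] at hs1 hs2
      nlinarith [mul_lt_mul_of_pos_left hs1 h, mul_lt_mul_of_pos_left hs2 h, mul_pos h h]
  · have heq : (fun t : ℝ => max t 0 ^ 3) =ᶠ[nhds t] fun s => s ^ 3 := by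
      filter_upwards [ev_pos h] with s hs
      simp [max_eq_left hs.le]
    rw [show (3 : ℝ) * max t 0 ^ 2 = (3 : ℕ) * t ^ (3 - 1) by rw [max_eq_left h.le]; norm_num]
    exact (hasDerivAt_pow 3 t).congr_of_eventuallyEq heq

lemma hq2 (t : ℝ) : HasDerivAt (fun t : ℝ => 3 * max t 0 ^ 2) (6 * max t 0) t := by
  rcases lt_trichotomy t 0 with h | h | h
  · have heq : (fun t : ℝ => 3 * max t 0 ^ 2) =ᶠ[nhds t] fun _ => 0 := by
      filter_upwards [ev_neg h] with s hs
      simp [max_eq_right hs.le]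
    rw [show (6 : ℝ) * max t 0 = 0 by rw [max_eq_right h.le]; ring]
    exact (hasDerivAt_const t 0).congr_of_eventuallyEq heq
  · subst h
    rw [hasDerivAt_iff_isLittleO, Asymptotics.isLittleO_iff]
    intro c hc
    rw [Metric.eventually_nhds_iff]
    refine ⟨c / 3, by positivity, fun {s} hs => ?_⟩
    simp only [Real.dist_eq, sub_zero] at hs
    rcases le_or_gt s 0 with h | h
    · have e : 3 * max s 0 ^ 2 - 3 * max (0:ℝ) 0 ^ 2 - (s - 0) • (6 * max (0:ℝ) 0) = 0 := by
        rw [max_eq_right h]; simp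
      rw [e]; simp; positivity
    · have e : 3 * max s 0 ^ 2 - 3 * max (0:ℝ) 0 ^ 2 - (s - 0) • (6 * max (0:ℝ) 0) = 3 * s ^ 2 := by
        rw [max_eq_left h.le]; simp
      rw [e, Real.norm_eq_abs, Real.norm_eq_abs, sub_zero, abs_of_pos (by positivity : (0:ℝ) < 3 * s ^ 2),
        abs_of_pos h]
      rw [abs_of_pos h] at hs
      nlinarith
  · have heq : (fun t : ℝ => 3 * max t 0 ^ 2) =ᶠ[nhds t] fun s => 3 * s ^ 2 := by
      filter_upwards [ev_pos h] with s hs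
      simp [max_eq_left hs.le]
    have hd := (hasDerivAt_pow 2 t).const_mul (3 : ℝ)
    rw [show (6 : ℝ) * max t 0 = 3 * (2 * t ^ (2 - 1)) by rw [max_eq_left h.le]; ring]
    exact (by exact_mod_cast hd : HasDerivAt (fun s:ℝ => 3 * s ^ 2) (3 * (2 * t ^ (2-1))) t).congr_of_eventuallyEq heq

lemma contDiff_q : ContDiff ℝ 2 (fun t : ℝ => max t 0 ^ 3) := by
  rw [show (2 : WithTop ℕ∞) = 1 + 1 from rfl, contDiff_succ_iff_deriv]
  refine ⟨fun t => (hq3 t).differentiableAt, by simp, ?_⟩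
  have hderiv : deriv (fun t : ℝ => max t 0 ^ 3) = fun t => 3 * max t 0 ^ 2 :=
    funext fun t => (hq3 t).deriv
  rw [hderiv, contDiff_one_iff_deriv]
  refine ⟨fun t => (hq2 t).differentiableAt, ?_⟩
  have hderiv2 : deriv (fun t : ℝ => 3 * max t 0 ^ 2) = fun t => 6 * max t 0 :=
    funext fun t => (hq2 t).deriv
  rw [hderiv2]
  exact continuous_const.mul (continuous_id.max continuous_const)
noncomputable def rho (z : ℝ) : ℝ := if z < 1 then z ^ 2 - z ^ 3 / 3 else z - 1 / 3

lemma rho_eq (z : ℝ) : rho z = z ^ 2 - z ^ 3 / 3 + max (z - 1) 0 ^ 3 / 3 := by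
  unfold rho
  split_ifs with h
  · rw [max_eq_right (by linarith : z - 1 ≤ 0)]; ring
  · rw [max_eq_left (by linarith : (0:ℝ) ≤ z - 1)]; ring

lemma rho_nonneg (z : ℝ) : 0 ≤ rho z := by
  unfold rho
  split_ifs with h
  · nlinarith [sq_nonneg z, mul_nonneg (sq_nonneg z) (by linarith : (0:ℝ) ≤ 3 - z)]
  · linarith

noncomputable def rho' (z : ℝ) : ℝ := 2 * z - z ^ 2 + max (z - 1) 0 ^ 2

lemma hasDerivAt_rho (z : ℝ) : HasDerivAt rho (rho' z) z := by
  have hc : HasDerivAt (fun s : ℝ => max (s - 1) 0 ^ 3) (3 * max (z - 1) 0 ^ 2 * 1) z :=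
    by have h := (hq3 (z - 1)).comp z ((hasDerivAt_id' z).sub_const 1); exact h
  have ha : HasDerivAt (fun s : ℝ => s ^ 2) ((2:ℕ) * z ^ (2 - 1)) z := hasDerivAt_pow 2 z
  have hb : HasDerivAt (fun s : ℝ => s ^ 3) ((3:ℕ) * z ^ (3 - 1)) z := hasDerivAt_pow 3 z
  have h := (ha.sub (hb.div_const 3)).add (hc.div_const 3)
  have hrho : rho = fun z : ℝ => z ^ 2 - z ^ 3 / 3 + max (z - 1) 0 ^ 3 / 3 := funext rho_eq
  rw [hrho]
  refine h.congr_deriv ?_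
  unfold rho'
  push_cast
  ring

lemma rho'_nonneg {z : ℝ} (hz : 0 ≤ z) : 0 ≤ rho' z := by
  unfold rho'
  rcases le_or_gt z 1 with h | h
  · rw [max_eq_right (by linarith)]
    nlinarith
  · rw [max_eq_left (by linarith)]
    nlinarith

lemma rho'_le_one {z : ℝ} : rho' z ≤ 1 := by
  unfold rho'
  rcases le_or_gt z 1 with h | h
  · rw [max_eq_right (by linarith)]
    nlinarith [sq_nonneg (z - 1)]
  · rw [max_eq_left (by linarith)]
    nlinarith
lemma rho_lb {z : ℝ} (hz : 1/2 ≤ z) : 5/24 ≤ rho z := by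
  unfold rho
  split_ifs with h
  · nlinarith [mul_nonneg (by linarith : (0:ℝ) ≤ z - 1/2) (by linarith : (0:ℝ) ≤ 1 - z)]
  · linarith

lemma one_add_pos {ε : ℝ} (hε : 0 < ε) (z : ℝ) : 0 < 1 + ε * rho z := by
  nlinarith [rho_nonneg z, mul_nonneg hε.le (rho_nonneg z)]

lemma hasDerivAt_g {ε : ℝ} (hε : 0 < ε) (z : ℝ) :
    HasDerivAt (fun z : ℝ => rho z / (1 + ε * rho z)) (rho' z / (1 + ε * rho z) ^ 2) z := by
  have h1 := hasDerivAt_rho z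
  have h2 : HasDerivAt (fun z : ℝ => 1 + ε * rho z) (ε * rho' z) z :=
    (h1.const_mul ε).const_add 1
  have hne : 1 + ε * rho z ≠ 0 := (one_add_pos hε z).ne'
  have h3 := h1.div h2 hne
  refine h3.congr_deriv ?_
  congr 1
  ring

lemma g_deriv_bound {ε : ℝ} (hε : 0 < ε) {z : ℝ} (hz : 0 ≤ z) :
    rho' z / (1 + ε * rho z) ^ 2 ≤ max (3/4) (1 / (1 + ε * (5/24))) := by
  have hD := one_add_pos hε z
  rcases le_or_gt z (1/2) with h | h
  · refine le_trans ?_ (le_max_left _ _)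
    have hr : rho' z ≤ 3/4 := by
      unfold rho'
      rw [max_eq_right (by linarith)]
      nlinarith [mul_nonneg (by linarith : (0:ℝ) ≤ 1/2 - z) (by linarith : (0:ℝ) ≤ 3/2 - z)]
    have hD1 : (1:ℝ) ≤ (1 + ε * rho z) ^ 2 := by
      nlinarith [mul_nonneg hε.le (rho_nonneg z)]
    calc rho' z / (1 + ε * rho z) ^ 2 ≤ rho' z := div_le_self (rho'_nonneg hz) hD1
      _ ≤ 3/4 := hr
  · refine le_trans ?_ (le_max_right _ _)
    have hrb : 5/24 ≤ rho z := rho_lb (by linarith)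
    have hden : 1 + ε * (5/24) ≤ (1 + ε * rho z) ^ 2 := by
      nlinarith [mul_le_mul_of_nonneg_left hrb hε.le]
    have hpos : (0:ℝ) < 1 + ε * (5/24) := by nlinarith
    exact div_le_div₀ zero_le_one rho'_le_one hpos hden
noncomputable section

abbrev E3 := EuclideanSpace ℝ (Fin 3)

def W : E3 →L[ℝ] E3 →L[ℝ] ℝ := innerSL ℝ

def Dcube (x : E3) : E3 →L[ℝ] ℝ := (3 * ‖x‖) • innerSL ℝ x

lemma cube_fderiv (x : E3) : HasFDerivAt (fun x : E3 => ‖x‖ ^ 3) (Dcube x) x := by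
  have h := hasFDerivAt_norm_rpow x (p := 3) (by norm_num)
  have e1 : ∀ y : E3, ‖y‖ ^ (3:ℝ) = ‖y‖ ^ (3:ℕ) := fun y => by
    rw [show (3:ℝ) = ((3:ℕ):ℝ) by norm_num, Real.rpow_natCast]
  have e2 : ‖x‖ ^ ((3:ℝ) - 2) = ‖x‖ := by
    norm_num
  simp only [e1, e2] at h
  exact h

lemma norm_hasFDerivAt {x : E3} (hx : x ≠ 0) :
    HasFDerivAt (fun y : E3 => ‖y‖) (‖x‖⁻¹ • innerSL ℝ x) x := by
  have hsq : HasFDerivAt (fun y : E3 => ‖y‖ ^ 2) ((2:ℕ) • innerSL ℝ x) x :=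
    (hasStrictFDerivAt_norm_sq x).hasFDerivAt
  have hx2 : ‖x‖ ^ 2 ≠ 0 := pow_ne_zero 2 (norm_ne_zero_iff.mpr hx)
  have hsqrt : HasDerivAt Real.sqrt (1 / (2 * Real.sqrt (‖x‖ ^ 2))) (‖x‖ ^ 2) :=
    Real.hasDerivAt_sqrt hx2
  have hcomp := hsqrt.comp_hasFDerivAt x hsq
  have e : (fun y : E3 => Real.sqrt (‖y‖ ^ 2)) = fun y : E3 => ‖y‖ := by
    funext y
    rw [Real.sqrt_sq (norm_nonneg y)]
  rw [show (Real.sqrt ∘ fun y : E3 => ‖y‖ ^ 2) = fun y : E3 => ‖y‖ from e] at hcomp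
  refine hcomp.congr_fderiv ?_
  rw [Real.sqrt_sq (norm_nonneg x)]
  ext v
  have hnx : ‖x‖ ≠ 0 := norm_ne_zero_iff.mpr hx
  simp only [ContinuousLinearMap.smul_apply, smul_eq_mul]
  simp only [two_nsmul, ContinuousLinearMap.add_apply, smul_eq_mul]
  field_simp
  ring

def DDcube (x : E3) : E3 →L[ℝ] E3 →L[ℝ] ℝ :=
  (3 * ‖x‖) • W + (3 * ‖x‖⁻¹) • ((innerSL ℝ x).smulRight (innerSL ℝ x))
lemma DDcube_zero : DDcube 0 = 0 := by
  unfold DDcube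
  ext v w
  simp

lemma Dcube_zero : Dcube 0 = 0 := by
  unfold Dcube
  ext v
  simp

lemma Dcube_hasFDerivAt (x : E3) : HasFDerivAt Dcube (DDcube x) x := by
  rcases eq_or_ne x 0 with rfl | hx
  · rw [DDcube_zero, hasFDerivAt_iff_isLittleO_nhds_zero]
    simp only [Dcube_zero, sub_zero, ContinuousLinearMap.zero_apply, zero_add]
    rw [Asymptotics.isLittleO_iff]
    intro c hc
    rw [Metric.eventually_nhds_iff]
    refine ⟨c / 3, by positivity, fun {y} hy => ?_⟩
    rw [dist_zero_right] at hy
    have h1 : ‖Dcube y‖ ≤ 3 * ‖y‖ * ‖y‖ := by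
      unfold Dcube
      rw [norm_smul (α := ℝ) (β := E3 →L[ℝ] ℝ), innerSL_apply_norm, Real.norm_eq_abs,
        abs_of_nonneg (by positivity : (0:ℝ) ≤ 3 * ‖y‖)]
    calc ‖Dcube y‖ ≤ 3 * ‖y‖ * ‖y‖ := h1
      _ ≤ c * ‖y‖ := by nlinarith [norm_nonneg y]
  · have hc : HasFDerivAt (fun y : E3 => 3 * ‖y‖) ((3 * ‖x‖⁻¹) • innerSL ℝ x) x := by
      have h := (norm_hasFDerivAt hx).const_mul (3:ℝ)
      rwa [smul_smul] at h
    have hW : HasFDerivAt (fun y : E3 => innerSL ℝ y) W x := W.hasFDerivAt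
    have h2 := hc.smul hW
    have e : ((3 * ‖x‖⁻¹) • innerSL ℝ x).smulRight (innerSL ℝ x)
        = (3 * ‖x‖⁻¹) • ((innerSL ℝ x).smulRight (innerSL ℝ x)) := by
      ext v w
      simp only [ContinuousLinearMap.smulRight_apply, ContinuousLinearMap.smul_apply,
        smul_eq_mul]
      ring
    rw [e] at h2
    exact h2

lemma continuous_DDcube : Continuous DDcube := by
  have hWc : Continuous fun x : E3 => innerSL ℝ x := W.continuous
  have h1 : Continuous fun x : E3 => (3 * ‖x‖) • W :=
    (continuous_const.mul continuous_norm).smul continuous_const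
  have hM : Continuous fun x : E3 => (innerSL ℝ x).smulRight (innerSL ℝ x) := by
    have hb := (ContinuousLinearMap.smulRightL ℝ E3 (E3 →L[ℝ] ℝ)).continuous₂
    exact hb.comp (hWc.prodMk hWc)
  have h2 : Continuous fun x : E3 => (3 * ‖x‖⁻¹) • (innerSL ℝ x).smulRight (innerSL ℝ x) := by
    rw [continuous_iff_continuousAt]
    intro x
    rcases eq_or_ne x 0 with rfl | hx
    · have hval : (3 * ‖(0:E3)‖⁻¹) • (innerSL ℝ (0:E3)).smulRight (innerSL ℝ (0:E3)) = 0 := by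
        ext v w
        simp
      rw [ContinuousAt, hval]
      have hbound : ∀ y : E3,
          ‖(3 * ‖y‖⁻¹) • (innerSL ℝ y).smulRight (innerSL ℝ y)‖ ≤ 3 * ‖y‖ := by
        intro y
        refine ContinuousLinearMap.opNorm_le_bound _ (by positivity) fun v => ?_
        have e : ((3 * ‖y‖⁻¹) • (innerSL ℝ y).smulRight (innerSL ℝ y)) v
            = (3 * ‖y‖⁻¹) • ((innerSL ℝ y v) • innerSL ℝ y) := rfl
        rw [e, norm_smul (α := ℝ) (β := E3 →L[ℝ] ℝ), norm_smul (α := ℝ) (β := E3 →L[ℝ] ℝ),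
          innerSL_apply_norm]
        rcases eq_or_ne y 0 with rfl | hy
        · simp
        · have hny : (0:ℝ) < ‖y‖ := norm_pos_iff.mpr hy
          have hiv : ‖innerSL ℝ y v‖ ≤ ‖y‖ * ‖v‖ := by
            refine le_trans ((innerSL ℝ y).le_opNorm v) ?_
            rw [innerSL_apply_norm]
          rw [Real.norm_eq_abs (3 * ‖y‖⁻¹), abs_of_nonneg (by positivity : (0:ℝ) ≤ 3 * ‖y‖⁻¹)]
          calc 3 * ‖y‖⁻¹ * (‖innerSL ℝ y v‖ * ‖y‖) ≤ 3 * ‖y‖⁻¹ * (‖y‖ * ‖v‖ * ‖y‖) := by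
                have := mul_le_mul_of_nonneg_right hiv (norm_nonneg y)
                have h3 : (0:ℝ) ≤ 3 * ‖y‖⁻¹ := by positivity
                exact mul_le_mul_of_nonneg_left this h3
            _ = 3 * ‖y‖ * ‖v‖ := by field_simp
      have htends : Filter.Tendsto (fun y : E3 => 3 * ‖y‖) (nhds 0) (nhds 0) := by
        have h : Filter.Tendsto (fun y : E3 => 3 * ‖y‖) (nhds 0) (nhds (3 * ‖(0:E3)‖)) :=
          (continuous_const.mul continuous_norm).tendsto (0:E3)
        rwa [norm_zero, mul_zero] at h
      exact squeeze_zero_norm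
        (f := fun y : E3 => (3 * ‖y‖⁻¹) • (innerSL ℝ y).smulRight (innerSL ℝ y)) hbound htends
    · exact ((continuousAt_const.mul (continuous_norm.continuousAt.inv₀
        (norm_ne_zero_iff.mpr hx))).smul hM.continuousAt)
  haveI : ContinuousAdd (E3 →L[ℝ] E3 →L[ℝ] ℝ) :=
    (SeminormedAddCommGroup.toIsTopologicalAddGroup (E := E3 →L[ℝ] E3 →L[ℝ] ℝ)).toContinuousAdd
  exact h1.add h2

lemma contDiff_cube : ContDiff ℝ 2 (fun x : E3 => ‖x‖ ^ 3) := by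
  rw [show (2 : WithTop ℕ∞) = 1 + 1 from rfl, contDiff_succ_iff_fderiv]
  refine ⟨fun x => (cube_fderiv x).differentiableAt, by simp, ?_⟩
  rw [show fderiv ℝ (fun x : E3 => ‖x‖ ^ 3) = Dcube from funext fun x => (cube_fderiv x).fderiv]
  rw [contDiff_one_iff_fderiv]
  refine ⟨fun x => (Dcube_hasFDerivAt x).differentiableAt, ?_⟩
  rw [show fderiv ℝ Dcube = DDcube from funext fun x => (Dcube_hasFDerivAt x).fderiv]
  exact continuous_DDcube
lemma contDiff_maxcube : ContDiff ℝ 2 (fun x : E3 => max (‖x‖ - 1) 0 ^ 3) := by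
  rw [contDiff_iff_contDiffAt]
  intro x
  rcases lt_or_ge ‖x‖ 1 with h | h
  · refine (contDiffAt_const (c := (0:ℝ))).congr_of_eventuallyEq ?_
    have hev : ∀ᶠ y : E3 in nhds x, ‖y‖ < 1 :=
      (continuous_norm.continuousAt (x := x)).eventually_lt continuousAt_const h
    filter_upwards [hev] with y hy
    rw [max_eq_right (by linarith)]
    norm_num
  · have hx : x ≠ 0 := by
      intro h0
      rw [h0, norm_zero] at h
      linarith
    have h1 : ContDiffAt ℝ 2 (fun y : E3 => ‖y‖ - 1) x :=
      (contDiffAt_norm ℝ hx).sub contDiffAt_const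
    exact contDiff_q.contDiffAt.comp x h1

lemma contDiff_rhonorm : ContDiff ℝ 2 (fun x : E3 => rho ‖x‖) := by
  have e : (fun x : E3 => rho ‖x‖)
      = fun x : E3 => ‖x‖ ^ 2 - ‖x‖ ^ 3 / 3 + max (‖x‖ - 1) 0 ^ 3 / 3 :=
    funext fun x => rho_eq _
  rw [e]
  exact ((contDiff_norm_sq ℝ).sub (contDiff_cube.div_const 3)).add
    (contDiff_maxcube.div_const 3)

end

noncomputable def fweight (ε : ℝ) (x : EuclideanSpace ℝ (Fin 3)) : ℝ :=
  rho ‖x‖ / (1 + ε * rho ‖x‖)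

theorem fweight_contDiff_and_grad_lt_one (ε : ℝ) (hε : 0 < ε) :
    ContDiff ℝ 2 (fweight ε) ∧
    ∃ c < (1 : ℝ), ∀ x, ‖fderiv ℝ (fweight ε) x‖ ≤ c := by
  constructor
  · have hF := contDiff_rhonorm
    have hden : ContDiff ℝ 2 (fun x : E3 => 1 + ε * rho ‖x‖) :=
      contDiff_const.add (contDiff_const.mul hF)
    exact hF.div hden fun x => (one_add_pos hε ‖x‖).ne'
  · set c := max (3/4 : ℝ) (1 / (1 + ε * (5/24))) with hc
    have hc1 : c < 1 := by
      apply max_lt (by norm_num)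
      rw [div_lt_one (by nlinarith)]
      nlinarith
    have hc0 : (0:ℝ) ≤ c := le_trans (by norm_num) (le_max_left _ _)
    refine ⟨c, hc1, fun x => ?_⟩
    apply norm_fderiv_le_of_lip' ℝ hc0
    apply Filter.Eventually.of_forall
    intro y
    have key : ‖rho ‖y‖ / (1 + ε * rho ‖y‖) - rho ‖x‖ / (1 + ε * rho ‖x‖)‖
        ≤ c * ‖(‖y‖) - (‖x‖)‖ := by
      refine Convex.norm_image_sub_le_of_norm_hasDerivWithin_le
        (f' := fun z => rho' z / (1 + ε * rho z) ^ 2)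
        (fun z _ => (hasDerivAt_g hε z).hasDerivWithinAt) (fun z hz => ?_)
        (convex_Ici 0) (Set.mem_Ici.mpr (norm_nonneg x)) (Set.mem_Ici.mpr (norm_nonneg y))
      rw [Real.norm_eq_abs, abs_of_nonneg (div_nonneg (rho'_nonneg hz) (by positivity))]
      exact g_deriv_bound hε hz
    have hnn : ‖(‖y‖ : ℝ) - ‖x‖‖ ≤ ‖y - x‖ := by
      rw [Real.norm_eq_abs]
      exact abs_norm_sub_norm_le y x
    calc ‖fweight ε y - fweight ε x‖ ≤ c * ‖(‖y‖ : ℝ) - ‖x‖‖ := key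
      _ ≤ c * ‖y - x‖ := mul_le_mul_of_nonneg_left hnn hc0
end

section
/- (Schur test) Let A : ℝ^d × ℝ^d → ℂ be measurable with M₁ := sup_y ∫ |A(x,y)| dx < ∞ and M₂ := sup_x ∫ |A(x,y)| dy < ∞. Then the integral operator (Aψ)(x) = ∫ A(x,y) ψ(y) dy is bounded on L²(ℝ^d) with operator norm at most √(M₁ M₂). -/
open MeasureTheory ENNReal

set_option maxHeartbeats 1000000 in
theorem schur_test (d : ℕ)
    (A : EuclideanSpace ℝ (Fin d) → EuclideanSpace ℝ (Fin d) → ℂ)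
    (hA : Measurable (Function.uncurry A)) (M₁ M₂ : ℝ)
    (h1 : ∀ y, ∫⁻ x, (‖A x y‖₊ : ℝ≥0∞) ≤ ENNReal.ofReal M₁)
    (h2 : ∀ x, ∫⁻ y, (‖A x y‖₊ : ℝ≥0∞) ≤ ENNReal.ofReal M₂)
    (ψ : EuclideanSpace ℝ (Fin d) → ℂ) (hψ : MemLp ψ 2 volume) :
    eLpNorm (fun x => ∫ y, A x y * ψ y) 2 volume ≤
      ENNReal.ofReal (Real.sqrt (M₁ * M₂)) * eLpNorm ψ 2 volume := by
  obtain ⟨ψ', hψ'sm, hψψ'⟩ := hψ.1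
  have hAψ : (fun x => ∫ y, A x y * ψ y) = fun x => ∫ y, A x y * ψ' y := by
    funext x
    exact integral_congr_ae (hψψ'.mono fun y hy => by simp only [hy])
  have heψ : eLpNorm ψ 2 volume = eLpNorm ψ' 2 volume := eLpNorm_congr_ae hψψ'
  rw [hAψ, heψ]
  -- measurability facts
  have ha : Measurable (Function.uncurry fun x y => ((‖A x y‖₊ : ℝ≥0∞))) := hA.enorm
  have hax : ∀ x, Measurable fun y => ((‖A x y‖₊ : ℝ≥0∞)) := fun x =>
    hA.of_uncurry_left.enorm
  have hay : ∀ y, Measurable fun x => ((‖A x y‖₊ : ℝ≥0∞)) := fun y =>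
    hA.of_uncurry_right.enorm
  have hb : Measurable fun y => ((‖ψ' y‖₊ : ℝ≥0∞)) := hψ'sm.measurable.enorm
  have hpq : Real.HolderConjugate 2 2 := Real.HolderConjugate.two_two
  -- pointwise key estimate
  have key : ∀ x, ((‖∫ y, A x y * ψ' y‖₊ : ℝ≥0∞)) ^ (2:ℝ) ≤
      ENNReal.ofReal M₂ * ∫⁻ y, (‖A x y‖₊ : ℝ≥0∞) * (‖ψ' y‖₊ : ℝ≥0∞) ^ (2:ℝ) := by
    intro x
    have h0 : ((‖∫ y, A x y * ψ' y‖₊ : ℝ≥0∞)) ≤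
        ∫⁻ y, (‖A x y‖₊ : ℝ≥0∞) * (‖ψ' y‖₊ : ℝ≥0∞) := by
      refine le_trans (enorm_integral_le_lintegral_enorm _) (le_of_eq ?_)
      simp [nnnorm_mul, ENNReal.coe_mul]
      rfl
    have holder := ENNReal.lintegral_mul_le_Lp_mul_Lq volume hpq
      (f := fun y => (‖A x y‖₊ : ℝ≥0∞) ^ (1/2 : ℝ))
      (g := fun y => (‖A x y‖₊ : ℝ≥0∞) ^ (1/2 : ℝ) * (‖ψ' y‖₊ : ℝ≥0∞))
      ((hax x).pow_const _).aemeasurable (((hax x).pow_const _).mul hb).aemeasurable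
    have hfg : ∀ y, ((fun y => (‖A x y‖₊ : ℝ≥0∞) ^ (1/2 : ℝ)) *
        (fun y => (‖A x y‖₊ : ℝ≥0∞) ^ (1/2 : ℝ) * (‖ψ' y‖₊ : ℝ≥0∞))) y =
        (‖A x y‖₊ : ℝ≥0∞) * (‖ψ' y‖₊ : ℝ≥0∞) := by
      intro y
      simp only [Pi.mul_apply]
      rw [← mul_assoc, ← ENNReal.rpow_add_of_nonneg _ _ (by norm_num) (by norm_num)]
      norm_num
    have hf2 : ∀ y, ((‖A x y‖₊ : ℝ≥0∞) ^ (1/2 : ℝ)) ^ (2:ℝ) = (‖A x y‖₊ : ℝ≥0∞) := by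
      intro y; rw [← ENNReal.rpow_mul]; norm_num
    have hg2 : ∀ y, ((‖A x y‖₊ : ℝ≥0∞) ^ (1/2 : ℝ) * (‖ψ' y‖₊ : ℝ≥0∞)) ^ (2:ℝ) =
        (‖A x y‖₊ : ℝ≥0∞) * (‖ψ' y‖₊ : ℝ≥0∞) ^ (2:ℝ) := by
      intro y
      rw [ENNReal.mul_rpow_of_nonneg _ _ (by norm_num), ← ENNReal.rpow_mul]
      norm_num
    simp only [hfg, hf2, hg2] at holder
    have h3 : ((‖∫ y, A x y * ψ' y‖₊ : ℝ≥0∞)) ≤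
        (ENNReal.ofReal M₂) ^ (1/2:ℝ) *
          (∫⁻ y, (‖A x y‖₊ : ℝ≥0∞) * (‖ψ' y‖₊ : ℝ≥0∞) ^ (2:ℝ)) ^ (1/2:ℝ) := by
      refine h0.trans (holder.trans ?_)
      exact mul_le_mul_left (ENNReal.rpow_le_rpow (h2 x) (by norm_num)) _
    calc ((‖∫ y, A x y * ψ' y‖₊ : ℝ≥0∞)) ^ (2:ℝ)
        ≤ ((ENNReal.ofReal M₂) ^ (1/2:ℝ) *
          (∫⁻ y, (‖A x y‖₊ : ℝ≥0∞) * (‖ψ' y‖₊ : ℝ≥0∞) ^ (2:ℝ)) ^ (1/2:ℝ)) ^ (2:ℝ) :=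
          ENNReal.rpow_le_rpow h3 (by norm_num)
      _ = ENNReal.ofReal M₂ * ∫⁻ y, (‖A x y‖₊ : ℝ≥0∞) * (‖ψ' y‖₊ : ℝ≥0∞) ^ (2:ℝ) := by
          rw [ENNReal.mul_rpow_of_nonneg _ _ (by norm_num), ← ENNReal.rpow_mul,
            ← ENNReal.rpow_mul]
          norm_num
  -- measurability of inner integral and of product function
  have hprod : Measurable fun p : (EuclideanSpace ℝ (Fin d)) × (EuclideanSpace ℝ (Fin d)) =>
      (‖A p.1 p.2‖₊ : ℝ≥0∞) * (‖ψ' p.2‖₊ : ℝ≥0∞) ^ (2:ℝ) :=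
    ha.mul ((hb.comp measurable_snd).pow_const _)
  have hswap : ∫⁻ x, ∫⁻ y, (‖A x y‖₊ : ℝ≥0∞) * (‖ψ' y‖₊ : ℝ≥0∞) ^ (2:ℝ) =
      ∫⁻ y, ∫⁻ x, (‖A x y‖₊ : ℝ≥0∞) * (‖ψ' y‖₊ : ℝ≥0∞) ^ (2:ℝ) :=
    lintegral_lintegral_swap hprod.aemeasurable
  have hinner : ∫⁻ y, ∫⁻ x, (‖A x y‖₊ : ℝ≥0∞) * (‖ψ' y‖₊ : ℝ≥0∞) ^ (2:ℝ) ≤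
      ENNReal.ofReal M₁ * ∫⁻ y, (‖ψ' y‖₊ : ℝ≥0∞) ^ (2:ℝ) := by
    rw [← lintegral_const_mul _ (hb.pow_const _)]
    refine lintegral_mono fun y => ?_
    rw [lintegral_mul_const _ (hay y)]
    exact mul_le_mul_left (h1 y) _
  have hIx : Measurable fun x => ∫⁻ y, (‖A x y‖₊ : ℝ≥0∞) * (‖ψ' y‖₊ : ℝ≥0∞) ^ (2:ℝ) :=
    hprod.lintegral_prod_right'
  -- main estimate
  have hsn : eLpNorm (fun x => ∫ y, A x y * ψ' y) 2 volume =
      (∫⁻ x, (‖∫ y, A x y * ψ' y‖₊ : ℝ≥0∞) ^ (2:ℝ)) ^ (1/2:ℝ) := by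
    rw [eLpNorm_eq_lintegral_rpow_enorm_toReal two_ne_zero ENNReal.ofNat_ne_top]
    norm_num
    rfl
  have hsn' : eLpNorm ψ' 2 volume = (∫⁻ y, (‖ψ' y‖₊ : ℝ≥0∞) ^ (2:ℝ)) ^ (1/2:ℝ) := by
    rw [eLpNorm_eq_lintegral_rpow_enorm_toReal two_ne_zero ENNReal.ofNat_ne_top]
    norm_num
    rfl
  rw [hsn, hsn']
  calc (∫⁻ x, (‖∫ y, A x y * ψ' y‖₊ : ℝ≥0∞) ^ (2:ℝ)) ^ (1/2:ℝ)
      ≤ (∫⁻ x, ENNReal.ofReal M₂ * ∫⁻ y, (‖A x y‖₊ : ℝ≥0∞) * (‖ψ' y‖₊ : ℝ≥0∞) ^ (2:ℝ)) ^ (1/2:ℝ) :=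
        ENNReal.rpow_le_rpow (lintegral_mono key) (by norm_num)
    _ = (ENNReal.ofReal M₂ * ∫⁻ x, ∫⁻ y, (‖A x y‖₊ : ℝ≥0∞) * (‖ψ' y‖₊ : ℝ≥0∞) ^ (2:ℝ)) ^ (1/2:ℝ) := by
        rw [lintegral_const_mul _ hIx]
    _ ≤ (ENNReal.ofReal M₂ * (ENNReal.ofReal M₁ * ∫⁻ y, (‖ψ' y‖₊ : ℝ≥0∞) ^ (2:ℝ))) ^ (1/2:ℝ) := by
        refine ENNReal.rpow_le_rpow ?_ (by norm_num)
        rw [hswap]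
        exact mul_le_mul_right hinner _
    _ = (ENNReal.ofReal M₂ * ENNReal.ofReal M₁) ^ (1/2:ℝ) *
          (∫⁻ y, (‖ψ' y‖₊ : ℝ≥0∞) ^ (2:ℝ)) ^ (1/2:ℝ) := by
        rw [← mul_assoc, ENNReal.mul_rpow_of_nonneg _ _ (by norm_num)]
    _ ≤ ENNReal.ofReal (Real.sqrt (M₁ * M₂)) * (∫⁻ y, (‖ψ' y‖₊ : ℝ≥0∞) ^ (2:ℝ)) ^ (1/2:ℝ) := by
        refine mul_le_mul_left ?_ _
        rcases le_or_gt 0 M₁ with hM1 | hM1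
        · rcases le_or_gt 0 M₂ with hM2 | hM2
          · rw [← ENNReal.ofReal_mul hM2, ENNReal.ofReal_rpow_of_nonneg (by positivity)
              (by norm_num : (0:ℝ) ≤ 1/2), Real.sqrt_eq_rpow, mul_comm M₂ M₁]
          · simp [ENNReal.ofReal_of_nonpos hM2.le, ENNReal.zero_rpow_of_pos, Real.sqrt_nonneg]
        · simp [ENNReal.ofReal_of_nonpos hM1.le, ENNReal.zero_rpow_of_pos, Real.sqrt_nonneg]
end
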